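/- Let θ₁, …, θ_d be real numbers such that max(‖kθ₁‖,…,‖kθ_d‖) ≥ C|k|^{-ν} for all nonzero integers k. For s ∈ ℕ define θ̃_s = θ₁ + sθ₂ + … + s^{d-1}θ_d. Then for any p ≥ d there exists C' > 0 such that for all distinct indices i₁,…,i_d ≤ p and all nonzero integers k, max(‖kθ̃_{i₁}‖, …, ‖kθ̃_{i_d}‖) ≥ C'|k|^{-ν}. -/

import Mathlib

/-- Distance from a real number to the nearest integer. -/
noncomputable def distNearestInt (x : ℝ) : ℝ := |x - round x|

lemma dni_nonneg (x : ℝ) : 0 ≤ distNearestInt x := abs_nonneg _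

lemma dni_le (x : ℝ) (m : ℤ) : distNearestInt x ≤ |x - m| := by
  unfold distNearestInt
  rcases eq_or_ne m (round x) with rfl | hne
  · exact le_refl _
  · have h1 : |x - (round x : ℝ)| ≤ 1/2 := abs_sub_round x
    have h2 : (1:ℝ) ≤ |((round x - m : ℤ) : ℝ)| := by
      exact_mod_cast Int.one_le_abs (sub_ne_zero.mpr (Ne.symm hne))
    push_cast at h2
    have h3 : |(round x : ℝ) - m| ≤ |(round x:ℝ) - x| + |x - m| := abs_sub_le _ _ _
    rw [abs_sub_comm (round x : ℝ) x] at h3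
    linarith

lemma dni_add (x y : ℝ) : distNearestInt (x+y) ≤ distNearestInt x + distNearestInt y := by
  have h1 := dni_le (x+y) (round x + round y)
  push_cast at h1
  have h2 : |x + y - ((round x : ℝ) + round y)| ≤ |x - round x| + |y - round y| := by
    have := abs_add_le (x - round x) (y - round y)
    have e : x - round x + (y - round y) = x + y - ((round x:ℝ) + round y) := by ring
    rwa [e] at this
  unfold distNearestInt
  unfold distNearestInt at h1
  linarith

lemma dni_int_mul (n : ℤ) (x : ℝ) : distNearestInt ((n:ℝ)*x) ≤ |(n:ℝ)| * distNearestInt x := by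
  have h1 := dni_le ((n:ℝ)*x) (n * round x)
  push_cast at h1
  calc distNearestInt ((n:ℝ)*x) ≤ |(n:ℝ)*x - (n:ℝ) * round x| := h1
    _ = |(n:ℝ)| * |x - round x| := by rw [← abs_mul]; ring_nf
    _ = |(n:ℝ)| * distNearestInt x := rfl

lemma dni_sum {ι : Type*} (s : Finset ι) (c : ι → ℤ) (x : ι → ℝ) :
    distNearestInt (∑ a ∈ s, (c a : ℝ) * x a) ≤ ∑ a ∈ s, |(c a : ℝ)| * distNearestInt (x a) := by
  classical
  induction s using Finset.induction_on with
  | empty => simp [distNearestInt]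
  | insert a s hns ih =>
    rw [Finset.sum_insert hns, Finset.sum_insert hns]
    calc distNearestInt ((c a : ℝ) * x a + ∑ b ∈ s, (c b : ℝ) * x b)
        ≤ distNearestInt ((c a : ℝ) * x a) + distNearestInt (∑ b ∈ s, (c b : ℝ) * x b) :=
          dni_add _ _
      _ ≤ |(c a : ℝ)| * distNearestInt (x a) + ∑ b ∈ s, |(c b : ℝ)| * distNearestInt (x b) :=
          add_le_add (dni_int_mul _ _) ih

lemma vdet_ne_zero {d : ℕ} (v : Fin d → ℕ) (hv : Function.Injective v) :
    (Matrix.vandermonde fun a => (v a : ℤ)).det ≠ 0 := by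
  rw [Matrix.det_vandermonde]
  apply Finset.prod_ne_zero_iff.mpr
  intro i _
  apply Finset.prod_ne_zero_iff.mpr
  intro j hj
  have hij : i ≠ j := by
    simp only [Finset.mem_Ioi] at hj
    exact ne_of_lt hj
  intro h0
  have : (v j : ℤ) = v i := sub_eq_zero.mp h0
  exact hij (hv (by exact_mod_cast this)).symm

lemma row_identity (d : ℕ) (θ : ℕ → ℝ) (v : Fin d → ℕ) (j : Fin d) :
    ∑ a : Fin d, (((Matrix.vandermonde fun b => (v b : ℤ)).adjugate j a : ℤ) : ℝ) *
      (∑ j' : Fin d, (v a : ℝ) ^ (j' : ℕ) * θ ((j' : ℕ) + 1)) =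
    ((Matrix.vandermonde fun b => (v b : ℤ)).det : ℝ) * θ ((j : ℕ) + 1) := by
  set M := Matrix.vandermonde fun b => (v b : ℤ) with hMdef
  have hM : M.adjugate * M = M.det • 1 := Matrix.adjugate_mul M
  have key : ∀ j' : Fin d, ∑ a : Fin d, ((M.adjugate j a : ℤ) : ℝ) * (v a : ℝ) ^ (j' : ℕ)
      = if j = j' then (M.det : ℝ) else 0 := by
    intro j'
    have h1 := congrFun (congrFun hM j) j'
    rw [Matrix.mul_apply] at h1
    simp only [Matrix.smul_apply, Matrix.one_apply, smul_eq_mul, mul_ite, mul_one, mul_zero] at h1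
    have h2 : ∑ a : Fin d, ((M.adjugate j a : ℤ) : ℝ) * (v a : ℝ) ^ (j' : ℕ)
        = ((∑ a : Fin d, M.adjugate j a * M a j' : ℤ) : ℝ) := by
      push_cast [hMdef, Matrix.vandermonde_apply]
      ring_nf
    rw [h2, h1]
    split <;> simp
  calc ∑ a : Fin d, ((M.adjugate j a : ℤ) : ℝ) * (∑ j' : Fin d, (v a : ℝ) ^ (j' : ℕ) * θ ((j' : ℕ) + 1))
      = ∑ a : Fin d, ∑ j' : Fin d, ((M.adjugate j a : ℤ) : ℝ) * (v a : ℝ) ^ (j' : ℕ) * θ ((j' : ℕ) + 1) := by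
        simp [Finset.mul_sum, mul_assoc]
    _ = ∑ j' : Fin d, ∑ a : Fin d, ((M.adjugate j a : ℤ) : ℝ) * (v a : ℝ) ^ (j' : ℕ) * θ ((j' : ℕ) + 1) :=
        Finset.sum_comm
    _ = ∑ j' : Fin d, (∑ a : Fin d, ((M.adjugate j a : ℤ) : ℝ) * (v a : ℝ) ^ (j' : ℕ)) * θ ((j' : ℕ) + 1) := by
        simp [Finset.sum_mul]
    _ = ∑ j' : Fin d, (if j = j' then (M.det : ℝ) else 0) * θ ((j' : ℕ) + 1) := by
        refine Finset.sum_congr rfl fun j' _ => ?_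
        rw [key j']
    _ = (M.det : ℝ) * θ ((j : ℕ) + 1) := by simp

noncomputable def vconst (d : ℕ) (C ν : ℝ) (v : Fin d → ℕ) : ℝ :=
  if (Matrix.vandermonde fun a => (v a : ℤ)).det = 0 then 1 else
    C * |((Matrix.vandermonde fun a => (v a : ℤ)).det : ℝ)| ^ (-ν) /
      (1 + ∑ j : Fin d, ∑ a : Fin d, |(((Matrix.vandermonde fun b => (v b : ℤ)).adjugate j a : ℤ) : ℝ)|)

lemma vconst_pos (d : ℕ) (C ν : ℝ) (hC : 0 < C) (v : Fin d → ℕ) : 0 < vconst d C ν v := by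
  unfold vconst
  split
  · exact one_pos
  · rename_i hdet
    apply div_pos
    · apply mul_pos hC
      apply Real.rpow_pos_of_pos
      rw [abs_pos]
      exact_mod_cast hdet
    · have : (0:ℝ) ≤ ∑ j : Fin d, ∑ a : Fin d, |(((Matrix.vandermonde fun b => (v b : ℤ)).adjugate j a : ℤ) : ℝ)| :=
        Finset.sum_nonneg fun _ _ => Finset.sum_nonneg fun _ _ => abs_nonneg _
      linarith

lemma key_main (d : ℕ) (θ : ℕ → ℝ) (C ν : ℝ)
    (h : ∀ k : ℤ, k ≠ 0 →
      ∃ i, 1 ≤ i ∧ i ≤ d ∧ C * |(k : ℝ)| ^ (-ν) ≤ distNearestInt ((k : ℝ) * θ i))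
    (v : Fin d → ℕ) (hv : Function.Injective v) (k : ℤ) (hk : k ≠ 0) :
    ∃ a : Fin d, vconst d C ν v * |(k : ℝ)| ^ (-ν) ≤
      distNearestInt ((k : ℝ) * ∑ j ∈ Finset.range d, (v a : ℝ) ^ j * θ (j + 1)) := by
  classical
  set M := Matrix.vandermonde fun b => (v b : ℤ) with hMdef
  have hdet : M.det ≠ 0 := vdet_ne_zero v hv
  set K : ℤ := k * M.det with hKdef
  have hK : K ≠ 0 := mul_ne_zero hk hdet
  obtain ⟨i, hi1, hi2, hineq⟩ := h K hK
  have hd0 : 0 < d := lt_of_lt_of_le hi1 hi2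
  set j : Fin d := ⟨i - 1, by omega⟩ with hjdef
  have hji : (j : ℕ) + 1 = i := by simp [hjdef]; omega
  set T : Fin d → ℝ := fun a => ∑ j' : Fin d, (v a : ℝ) ^ (j' : ℕ) * θ ((j' : ℕ) + 1) with hT
  have hid : (K : ℝ) * θ i = ∑ a : Fin d, ((M.adjugate j a : ℤ) : ℝ) * ((k : ℝ) * T a) := by
    have := row_identity d θ v j
    rw [hji] at this
    have e : ∑ a : Fin d, ((M.adjugate j a : ℤ) : ℝ) * ((k : ℝ) * T a)
        = (k : ℝ) * ∑ a : Fin d, ((M.adjugate j a : ℤ) : ℝ) * T a := by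
      rw [Finset.mul_sum]; exact Finset.sum_congr rfl fun a _ => by ring
    rw [e, hT, this, hKdef]
    push_cast
    ring
  obtain ⟨a, -, ha⟩ := Finset.exists_max_image Finset.univ
    (fun a => distNearestInt ((k : ℝ) * T a)) ⟨j, Finset.mem_univ j⟩
  refine ⟨a, ?_⟩
  set A : ℝ := 1 + ∑ j' : Fin d, ∑ b : Fin d, |((M.adjugate j' b : ℤ) : ℝ)| with hA
  have hAnn : ∀ j' : Fin d, (0:ℝ) ≤ ∑ b : Fin d, |((M.adjugate j' b : ℤ) : ℝ)| :=
    fun _ => Finset.sum_nonneg fun _ _ => abs_nonneg _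
  have hA1 : (1:ℝ) ≤ A := by
    have : (0:ℝ) ≤ ∑ j' : Fin d, ∑ b : Fin d, |((M.adjugate j' b : ℤ) : ℝ)| :=
      Finset.sum_nonneg fun j' _ => hAnn j'
    linarith [this]
  have hA0 : (0:ℝ) < A := lt_of_lt_of_le one_pos hA1
  have hrow : ∑ b : Fin d, |((M.adjugate j b : ℤ) : ℝ)| ≤ A := by
    rw [hA]
    have := Finset.single_le_sum (f := fun j' : Fin d => ∑ b : Fin d, |((M.adjugate j' b : ℤ) : ℝ)|)
      (fun j' _ => hAnn j') (Finset.mem_univ j)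
    linarith
  have step1 : distNearestInt ((K : ℝ) * θ i)
      ≤ ∑ b : Fin d, |((M.adjugate j b : ℤ) : ℝ)| * distNearestInt ((k : ℝ) * T b) := by
    rw [hid]
    exact dni_sum Finset.univ (fun b => M.adjugate j b) (fun b => (k : ℝ) * T b)
  have step2 : ∑ b : Fin d, |((M.adjugate j b : ℤ) : ℝ)| * distNearestInt ((k : ℝ) * T b)
      ≤ A * distNearestInt ((k : ℝ) * T a) := by
    calc ∑ b : Fin d, |((M.adjugate j b : ℤ) : ℝ)| * distNearestInt ((k : ℝ) * T b)
        ≤ ∑ b : Fin d, |((M.adjugate j b : ℤ) : ℝ)| * distNearestInt ((k : ℝ) * T a) := by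
          refine Finset.sum_le_sum fun b _ => ?_
          exact mul_le_mul_of_nonneg_left (ha b (Finset.mem_univ b)) (abs_nonneg _)
      _ = (∑ b : Fin d, |((M.adjugate j b : ℤ) : ℝ)|) * distNearestInt ((k : ℝ) * T a) := by
          rw [Finset.sum_mul]
      _ ≤ A * distNearestInt ((k : ℝ) * T a) :=
          mul_le_mul_of_nonneg_right hrow (dni_nonneg _)
  have hKabs : |(K : ℝ)| ^ (-ν) = |(k : ℝ)| ^ (-ν) * |((M.det : ℤ) : ℝ)| ^ (-ν) := by
    have : |(K : ℝ)| = |(k : ℝ)| * |((M.det : ℤ) : ℝ)| := by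
      rw [hKdef]; push_cast; rw [abs_mul]
    rw [this, Real.mul_rpow (abs_nonneg _) (abs_nonneg _)]
  have main : C * (|(k : ℝ)| ^ (-ν) * |((M.det : ℤ) : ℝ)| ^ (-ν))
      ≤ A * distNearestInt ((k : ℝ) * T a) := by
    calc C * (|(k : ℝ)| ^ (-ν) * |((M.det : ℤ) : ℝ)| ^ (-ν))
        = C * |(K : ℝ)| ^ (-ν) := by rw [hKabs]
      _ ≤ distNearestInt ((K : ℝ) * θ i) := hineq
      _ ≤ A * distNearestInt ((k : ℝ) * T a) := le_trans step1 step2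
  have hvc : vconst d C ν v = C * |((M.det : ℤ) : ℝ)| ^ (-ν) / A := by
    unfold vconst
    rw [if_neg hdet]
  have final : vconst d C ν v * |(k : ℝ)| ^ (-ν) ≤ distNearestInt ((k : ℝ) * T a) := by
    rw [hvc, div_mul_eq_mul_div, div_le_iff₀ hA0]
    calc C * |((M.det : ℤ) : ℝ)| ^ (-ν) * |(k : ℝ)| ^ (-ν)
        = C * (|(k : ℝ)| ^ (-ν) * |((M.det : ℤ) : ℝ)| ^ (-ν)) := by ring
      _ ≤ A * distNearestInt ((k : ℝ) * T a) := main
      _ = distNearestInt ((k : ℝ) * T a) * A := by ring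
  have hTa : T a = ∑ j ∈ Finset.range d, (v a : ℝ) ^ j * θ (j + 1) := by
    rw [hT]
    exact Fin.sum_univ_eq_sum_range (fun j => (v a : ℝ) ^ j * θ (j + 1)) d
  rwa [hTa] at final

/-- If `(θ₁,…,θ_d)` satisfies the simultaneous Diophantine condition, then for any `p ≥ d`
the numbers `θ̃_s = θ₁ + sθ₂ + … + s^{d-1}θ_d`, `s = 1,…,p`, are such that every `d`-tuple
with distinct indices satisfies the same simultaneous Diophantine condition with some
constant `C' > 0`. -/
theorem vandermonde_combinations_diophantine
    (d : ℕ) (hd : 2 ≤ d) (θ : ℕ → ℝ) (C ν : ℝ) (hC : 0 < C) (hν : 0 < ν)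
    (h : ∀ k : ℤ, k ≠ 0 →
      ∃ i, 1 ≤ i ∧ i ≤ d ∧ C * |(k : ℝ)| ^ (-ν) ≤ distNearestInt ((k : ℝ) * θ i))
    (p : ℕ) (hp : d ≤ p) :
    ∃ C' : ℝ, 0 < C' ∧
      ∀ idx : Fin d → ℕ, (∀ a, 1 ≤ idx a ∧ idx a ≤ p) → Function.Injective idx →
        ∀ k : ℤ, k ≠ 0 →
          ∃ a : Fin d, C' * |(k : ℝ)| ^ (-ν) ≤
            distNearestInt ((k : ℝ) *
              (∑ j ∈ Finset.range d, ((idx a : ℝ)) ^ j * θ (j + 1))) := by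
  classical
  have hne : (Finset.univ : Finset (Fin d → Fin (p + 1))).Nonempty :=
    Finset.univ_nonempty
  set C' : ℝ := (Finset.univ : Finset (Fin d → Fin (p + 1))).inf' hne
    (fun f => vconst d C ν (fun a => (f a : ℕ))) with hC'
  refine ⟨C', ?_, ?_⟩
  · rw [hC', Finset.lt_inf'_iff]
    exact fun f _ => vconst_pos d C ν hC _
  · intro idx hidx hinj k hk
    set f : Fin d → Fin (p + 1) := fun a => ⟨idx a, by have := (hidx a).2; omega⟩ with hf
    have hfe : (fun a => ((f a : ℕ))) = idx := by
      funext a; simp [hf]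
    have hle : C' ≤ vconst d C ν idx := by
      rw [hC']
      have := Finset.inf'_le (fun g : Fin d → Fin (p + 1) => vconst d C ν (fun a => (g a : ℕ)))
        (Finset.mem_univ f)
      rwa [hfe] at this
    obtain ⟨a, ha⟩ := key_main d θ C ν h idx hinj k hk
    refine ⟨a, le_trans ?_ ha⟩
    have : (0:ℝ) ≤ |(k : ℝ)| ^ (-ν) := Real.rpow_nonneg (abs_nonneg _) _
    exact mul_le_mul_of_nonneg_right hle this
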